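/- Let n ∈ ℕ, s ≥ 0, and c, C > 0. Let Φ be an n × n real orthogonal matrix and let λ_{0,ℓ}, λ_{1,ℓ} (ℓ = 1,…,n) be reals with c·ℓ^{-s/2} ≤ |λ_{i,ℓ}| ≤ C for i = 0,1. Set C_i := Φ · diag(λ_{i,1}², …, λ_{i,n}²) · Φᵀ. Then (1/2)·tr((C₁⁻¹ C₀ − I_n)²) ≤ (2C²/c⁴) · Σ_{ℓ=1}^n ℓ^{2s} (λ_{0,ℓ} − λ_{1,ℓ})² ≤ (2C²/c⁴) · (Σ_{ℓ=1}^n ℓ^s |λ_{0,ℓ} − λ_{1,ℓ}|)². -/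

import Mathlib

open Matrix

/-- KL-variation bound of Lemma A.1: with `C_i = Φ diag(λ_i²) Φᵀ`, orthogonal `Φ`,
and `c ℓ^{-s/2} ≤ |λ_{i,ℓ}| ≤ C`,
`(1/2) tr((C₁⁻¹C₀ − I)²) ≤ (2C²/c⁴) Σ ℓ^{2s}(λ₀−λ₁)² ≤ (2C²/c⁴)(Σ ℓ^s|λ₀−λ₁|)²`. -/
theorem stmt_12 (n : ℕ) (s c C : ℝ) (hs : 0 ≤ s) (hc : 0 < c) (hC : 0 < C)
    (Φ : Matrix (Fin n) (Fin n) ℝ) (hΦ : Φᵀ * Φ = 1)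
    (lam0 lam1 : Fin n → ℝ)
    (hlo0 : ∀ ℓ : Fin n, c * (((ℓ : ℕ) : ℝ) + 1) ^ (-(s / 2)) ≤ |lam0 ℓ|)
    (hhi0 : ∀ ℓ : Fin n, |lam0 ℓ| ≤ C)
    (hlo1 : ∀ ℓ : Fin n, c * (((ℓ : ℕ) : ℝ) + 1) ^ (-(s / 2)) ≤ |lam1 ℓ|)
    (hhi1 : ∀ ℓ : Fin n, |lam1 ℓ| ≤ C) :
    ((1 / 2) * Matrix.trace
        (((Φ * Matrix.diagonal (fun ℓ => lam1 ℓ ^ 2) * Φᵀ)⁻¹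
          * (Φ * Matrix.diagonal (fun ℓ => lam0 ℓ ^ 2) * Φᵀ) - 1) ^ 2)
      ≤ (2 * C ^ 2 / c ^ 4)
          * ∑ ℓ : Fin n, (((ℓ : ℕ) : ℝ) + 1) ^ (2 * s) * (lam0 ℓ - lam1 ℓ) ^ 2) ∧
    ((2 * C ^ 2 / c ^ 4)
          * ∑ ℓ : Fin n, (((ℓ : ℕ) : ℝ) + 1) ^ (2 * s) * (lam0 ℓ - lam1 ℓ) ^ 2
      ≤ (2 * C ^ 2 / c ^ 4)
          * (∑ ℓ : Fin n, (((ℓ : ℕ) : ℝ) + 1) ^ s * |lam0 ℓ - lam1 ℓ|) ^ 2) := by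
  have hx : ∀ ℓ : Fin n, (0:ℝ) < ((ℓ : ℕ) : ℝ) + 1 := fun ℓ => by positivity
  have hlam1pos : ∀ ℓ : Fin n, (0:ℝ) < |lam1 ℓ| := fun ℓ =>
    lt_of_lt_of_le (by positivity) (hlo1 ℓ)
  have hne1 : ∀ ℓ : Fin n, lam1 ℓ ^ 2 ≠ 0 := fun ℓ =>
    pow_ne_zero 2 (abs_pos.mp (hlam1pos ℓ))
  have hΦΦT : Φ * Φᵀ = 1 := mul_eq_one_comm.mp hΦ
  -- inverse
  set D1 := Matrix.diagonal (fun ℓ => lam1 ℓ ^ 2) with hD1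
  set D0 := Matrix.diagonal (fun ℓ => lam0 ℓ ^ 2) with hD0
  have hinv : (Φ * D1 * Φᵀ)⁻¹ = Φ * Matrix.diagonal (fun ℓ => (lam1 ℓ ^ 2)⁻¹) * Φᵀ := by
    apply Matrix.inv_eq_right_inv
    have hDD : D1 * Matrix.diagonal (fun ℓ => (lam1 ℓ ^ 2)⁻¹) = 1 := by
      rw [hD1, Matrix.diagonal_mul_diagonal]
      have hfe : (fun i => lam1 i ^ 2 * (lam1 i ^ 2)⁻¹) = fun _ : Fin n => (1:ℝ) :=
        funext fun i => mul_inv_cancel₀ (hne1 i)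
      rw [hfe, Matrix.diagonal_one]
    calc Φ * D1 * Φᵀ * (Φ * Matrix.diagonal (fun ℓ => (lam1 ℓ ^ 2)⁻¹) * Φᵀ)
        = Φ * D1 * (Φᵀ * Φ) * Matrix.diagonal (fun ℓ => (lam1 ℓ ^ 2)⁻¹) * Φᵀ := by
          simp only [Matrix.mul_assoc]
      _ = Φ * (D1 * Matrix.diagonal (fun ℓ => (lam1 ℓ ^ 2)⁻¹)) * Φᵀ := by
          rw [hΦ]; simp [Matrix.mul_assoc]
      _ = 1 := by rw [hDD, Matrix.mul_one, hΦΦT]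
  set f : Fin n → ℝ := fun ℓ => (lam1 ℓ ^ 2)⁻¹ * lam0 ℓ ^ 2 - 1 with hf
  have hM : (Φ * D1 * Φᵀ)⁻¹ * (Φ * D0 * Φᵀ) - 1 = Φ * Matrix.diagonal f * Φᵀ := by
    rw [hinv]
    have : Φ * Matrix.diagonal (fun ℓ => (lam1 ℓ ^ 2)⁻¹) * Φᵀ * (Φ * D0 * Φᵀ)
        = Φ * (Matrix.diagonal (fun ℓ => (lam1 ℓ ^ 2)⁻¹) * D0) * Φᵀ := by
      calc Φ * Matrix.diagonal (fun ℓ => (lam1 ℓ ^ 2)⁻¹) * Φᵀ * (Φ * D0 * Φᵀ)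
          = Φ * Matrix.diagonal (fun ℓ => (lam1 ℓ ^ 2)⁻¹) * (Φᵀ * Φ) * D0 * Φᵀ := by
            simp only [Matrix.mul_assoc]
        _ = Φ * (Matrix.diagonal (fun ℓ => (lam1 ℓ ^ 2)⁻¹) * D0) * Φᵀ := by
            rw [hΦ]; simp [Matrix.mul_assoc]
    rw [this, hD0, Matrix.diagonal_mul_diagonal]
    have hfd : Matrix.diagonal f
        = Matrix.diagonal (fun i => (lam1 i ^ 2)⁻¹ * lam0 i ^ 2) - 1 := by
      rw [← Matrix.diagonal_one, ← Matrix.diagonal_sub]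
    rw [hfd, Matrix.mul_sub, Matrix.sub_mul, Matrix.mul_one, hΦΦT]
  have htr : Matrix.trace (((Φ * D1 * Φᵀ)⁻¹ * (Φ * D0 * Φᵀ) - 1) ^ 2)
      = ∑ ℓ : Fin n, f ℓ ^ 2 := by
    rw [hM, sq]
    have : Φ * Matrix.diagonal f * Φᵀ * (Φ * Matrix.diagonal f * Φᵀ)
        = Φ * (Matrix.diagonal f * Matrix.diagonal f) * Φᵀ := by
      calc Φ * Matrix.diagonal f * Φᵀ * (Φ * Matrix.diagonal f * Φᵀ)
          = Φ * Matrix.diagonal f * (Φᵀ * Φ) * Matrix.diagonal f * Φᵀ := by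
            simp only [Matrix.mul_assoc]
        _ = _ := by rw [hΦ]; simp [Matrix.mul_assoc]
    rw [this, Matrix.diagonal_mul_diagonal]
    rw [Matrix.trace_mul_cycle, hΦ, Matrix.one_mul, Matrix.trace_diagonal]
    simp [sq]
  constructor
  · rw [htr]
    have key : ∀ ℓ : Fin n, f ℓ ^ 2
        ≤ 4 * C ^ 2 / c ^ 4 * ((((ℓ : ℕ) : ℝ) + 1) ^ (2 * s) * (lam0 ℓ - lam1 ℓ) ^ 2) := by
      intro ℓ
      set x : ℝ := ((ℓ : ℕ) : ℝ) + 1 with hxdef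
      have hxpos : (0:ℝ) < x := hx ℓ
      have hb2 : c ^ 2 * x ^ (-s) ≤ lam1 ℓ ^ 2 := by
        have h := hlo1 ℓ
        have hnn : (0:ℝ) ≤ c * x ^ (-(s/2)) := by positivity
        have := mul_self_le_mul_self hnn h
        have hxx : x ^ (-(s/2)) * x ^ (-(s/2)) = x ^ (-s) := by
          rw [← Real.rpow_add hxpos]; ring_nf
        calc c ^ 2 * x ^ (-s) = (c * x ^ (-(s/2))) * (c * x ^ (-(s/2))) := by
              rw [← hxx]; ring
          _ ≤ |lam1 ℓ| * |lam1 ℓ| := this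
          _ = lam1 ℓ ^ 2 := by rw [← abs_mul, abs_mul_self, sq]
      have hb2pos : (0:ℝ) < lam1 ℓ ^ 2 := lt_of_lt_of_le (by positivity) hb2
      have hfval : f ℓ = (lam0 ℓ ^ 2 - lam1 ℓ ^ 2) / lam1 ℓ ^ 2 := by
        rw [hf]; field_simp
        rw [sub_div, div_self (hne1 ℓ)]
      rw [hfval, div_pow]
      have hnum : (lam0 ℓ ^ 2 - lam1 ℓ ^ 2) ^ 2 ≤ 4 * C ^ 2 * (lam0 ℓ - lam1 ℓ) ^ 2 := by
        have h1 : (lam0 ℓ ^ 2 - lam1 ℓ ^ 2) ^ 2 = (lam0 ℓ - lam1 ℓ) ^ 2 * (lam0 ℓ + lam1 ℓ) ^ 2 := by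
          ring
        have h2 : (lam0 ℓ + lam1 ℓ) ^ 2 ≤ (2 * C) ^ 2 := by
          have := abs_add_le (lam0 ℓ) (lam1 ℓ)
          have habs : |lam0 ℓ + lam1 ℓ| ≤ 2 * C := by
            have := hhi0 ℓ; have := hhi1 ℓ; linarith [abs_add_le (lam0 ℓ) (lam1 ℓ)]
          calc (lam0 ℓ + lam1 ℓ) ^ 2 = |lam0 ℓ + lam1 ℓ| ^ 2 := (sq_abs _).symm
            _ ≤ (2 * C) ^ 2 := by
                apply pow_le_pow_left₀ (abs_nonneg _) habs
        nlinarith [sq_nonneg (lam0 ℓ - lam1 ℓ)]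
      have hden : (c ^ 2 * x ^ (-s)) ^ 2 ≤ (lam1 ℓ ^ 2) ^ 2 :=
        pow_le_pow_left₀ (by positivity) hb2 2
      have hdenpos : (0:ℝ) < (c ^ 2 * x ^ (-s)) ^ 2 := by positivity
      calc (lam0 ℓ ^ 2 - lam1 ℓ ^ 2) ^ 2 / (lam1 ℓ ^ 2) ^ 2
          ≤ (4 * C ^ 2 * (lam0 ℓ - lam1 ℓ) ^ 2) / ((c ^ 2 * x ^ (-s)) ^ 2) := by
            apply div_le_div₀ (by positivity) hnum hdenpos hden
        _ = 4 * C ^ 2 / c ^ 4 * (x ^ (2 * s) * (lam0 ℓ - lam1 ℓ) ^ 2) := by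
            rw [mul_pow, ← Real.rpow_natCast (x ^ (-s)) 2, ← Real.rpow_mul hxpos.le]
            push_cast
            rw [show -s * 2 = -(2 * s) by ring, Real.rpow_neg hxpos.le]
            have hxs : (0:ℝ) < x ^ (2*s) := Real.rpow_pos_of_pos hxpos _
            field_simp
    calc (1/2) * ∑ ℓ : Fin n, f ℓ ^ 2
        ≤ (1/2) * ∑ ℓ : Fin n, 4 * C ^ 2 / c ^ 4 * ((((ℓ : ℕ) : ℝ) + 1) ^ (2 * s) * (lam0 ℓ - lam1 ℓ) ^ 2) := by
          apply mul_le_mul_of_nonneg_left (Finset.sum_le_sum fun ℓ _ => key ℓ) (by norm_num)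
      _ = (2 * C ^ 2 / c ^ 4) * ∑ ℓ : Fin n, (((ℓ : ℕ) : ℝ) + 1) ^ (2 * s) * (lam0 ℓ - lam1 ℓ) ^ 2 := by
          rw [Finset.mul_sum, Finset.mul_sum]
          congr 1; funext ℓ; ring
  · apply mul_le_mul_of_nonneg_left _ (by positivity)
    have heq : ∀ ℓ : Fin n, (((ℓ : ℕ) : ℝ) + 1) ^ (2 * s) * (lam0 ℓ - lam1 ℓ) ^ 2
        = ((((ℓ : ℕ) : ℝ) + 1) ^ s * |lam0 ℓ - lam1 ℓ|) ^ 2 := by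
      intro ℓ
      rw [mul_pow, sq_abs, ← Real.rpow_natCast ((((ℓ : ℕ) : ℝ) + 1) ^ s) 2,
        ← Real.rpow_mul (hx ℓ).le]
      norm_num [mul_comm]
    rw [Finset.sum_congr rfl fun ℓ _ => heq ℓ]
    exact Finset.sum_sq_le_sq_sum_of_nonneg fun ℓ _ => by positivity
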